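/- The 2-adic extension T₂ of the 3x+1 function is ergodic with respect to the normalized Haar measure on ℤ₂: if T₂ : ℤ₂ → ℤ₂ satisfies 2·T₂(x) = 3x + 1 for every x ∈ ℤ₂ not divisible by 2 and 2·T₂(x) = x for every x ∈ ℤ₂ divisible by 2, then T₂ is ergodic for the Haar measure (every measurable set A with T₂⁻¹(A) = A up to measure zero has measure 0 or 1). -/

import Mathlib

open MeasureTheory Set
open scoped ENNReal

noncomputable instance : MeasurableSpace ℤ_[2] := borel _
instance : BorelSpace ℤ_[2] := ⟨rfl⟩

namespace Collatz2






lemma two_ne_zero' : (2 : ℤ_[2]) ≠ 0 := two_ne_zero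

lemma not_two_dvd_one : ¬ (2 : ℤ_[2]) ∣ 1 := by
  intro h
  have h1 : ‖(1 : ℤ_[2])‖ < 1 := by
    have := (PadicInt.norm_lt_one_iff_dvd (1 : ℤ_[2])).2 (by exact_mod_cast h)
    exact this
  simp at h1

lemma isUnit_three : IsUnit (3 : ℤ_[2]) := by
  rw [PadicInt.isUnit_iff]
  refine le_antisymm (PadicInt.norm_le_one _) ?_
  by_contra h
  push_neg at h
  have h3 : ((3 : ℤ) : ℤ_[2]) = (3 : ℤ_[2]) := by norm_cast
  rw [← h3, PadicInt.norm_int_lt_one_iff_dvd] at h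
  omega

lemma parity (x : ℤ_[2]) : (2 : ℤ_[2]) ∣ x ∨ (2 : ℤ_[2]) ∣ (x - 1) := by
  have hs := PadicInt.appr_spec 1 x
  rw [pow_one, Ideal.mem_span_singleton] at hs
  have hl := PadicInt.appr_lt x 1
  interval_cases h : (PadicInt.appr x 1)
  · left; simpa using hs
  · right; simpa using hs



lemma me_affine (c b : ℤ_[2]) (hb : b ≠ 0) :
    MeasurableEmbedding (fun t : ℤ_[2] => c + b * t) := by
  have hinj : Function.Injective (fun t : ℤ_[2] => c + b * t) := by
    intro x y h
    simp only [add_right_inj] at h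
    exact mul_left_cancel₀ hb h
  have hcont : Continuous (fun t : ℤ_[2] => c + b * t) := by continuity
  exact (hcont.isClosedEmbedding hinj).measurableEmbedding

lemma comap_affine (μ : Measure ℤ_[2]) [μ.IsAddHaarMeasure] [IsProbabilityMeasure μ]
    (c b : ℤ_[2]) (hb : b ≠ 0) :
    μ.comap (fun t : ℤ_[2] => c + b * t) = μ {x : ℤ_[2] | b ∣ x} • μ := by
  set f : ℤ_[2] → ℤ_[2] := fun t => c + b * t with hf_def
  have hf := me_affine c b hb
  set ν : Measure ℤ_[2] := μ.comap f with hν_def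
  have hν_apply : ∀ s : Set ℤ_[2], ν s = μ (f '' s) := fun s => hf.comap_apply μ s
  have hinv : ν.IsAddLeftInvariant := by
    constructor
    intro a
    ext s hs
    rw [Measure.map_apply (measurable_const_add a) hs, hν_apply, hν_apply]
    have himg : f '' ((a + ·) ⁻¹' s) = (fun y => b * a + y) ⁻¹' (f '' s) := by
      ext y
      simp only [mem_image, mem_preimage, hf_def]
      constructor
      · rintro ⟨t, hts, rfl⟩
        exact ⟨a + t, hts, by ring⟩
      · rintro ⟨e, hes, he⟩
        exact ⟨e - a, by simpa using hes, by linear_combination he⟩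
    rw [himg, measure_preimage_add]
  have hfin : IsFiniteMeasure ν := by
    constructor
    rw [hν_apply]
    exact measure_lt_top μ _
  have key := Measure.isAddLeftInvariant_eq_smul ν μ
  have hrange : f '' univ = (fun y => -c + y) ⁻¹' {x : ℤ_[2] | b ∣ x} := by
    ext y
    simp only [image_univ, mem_range, mem_preimage, mem_setOf_eq, hf_def]
    constructor
    · rintro ⟨t, rfl⟩; exact ⟨t, by ring⟩
    · rintro ⟨t, ht⟩; exact ⟨t, by linear_combination -ht⟩
  have huniv : ν univ = μ {x : ℤ_[2] | b ∣ x} := by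
    rw [hν_apply, hrange, measure_preimage_add]
  ext s hs
  have h1 : ν s = ν univ * μ s := by
    rw [key]
    simp only [Measure.smul_apply, measure_univ, ENNReal.smul_def, smul_eq_mul, mul_one]
  rw [Measure.smul_apply, smul_eq_mul, ← huniv]
  exact h1



lemma dvd_iff_norm (n : ℕ) (x : ℤ_[2]) :
    (2 : ℤ_[2]) ^ n ∣ x ↔ ‖x‖ ≤ (2 : ℝ) ^ (-n : ℤ) := by
  have h := PadicInt.norm_le_pow_iff_mem_span_pow (p := 2) x n
  rw [Ideal.mem_span_singleton] at h
  have hc : ((2 : ℕ) : ℝ) = (2 : ℝ) := by norm_num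
  have hc2 : ((2 : ℕ) : ℤ_[2]) = (2 : ℤ_[2]) := by norm_num
  rw [hc, hc2] at h
  exact h.symm

lemma isClosed_dvdSet (n : ℕ) : IsClosed {x : ℤ_[2] | (2 : ℤ_[2]) ^ n ∣ x} := by
  have : {x : ℤ_[2] | (2 : ℤ_[2]) ^ n ∣ x} = {x : ℤ_[2] | ‖x‖ ≤ (2 : ℝ) ^ (-n : ℤ)} := by
    ext x; exact dvd_iff_norm n x
  rw [this]
  exact isClosed_le continuous_norm continuous_const

lemma isOpen_dvdSet (n : ℕ) : IsOpen {x : ℤ_[2] | (2 : ℤ_[2]) ^ n ∣ x} := by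
  have : {x : ℤ_[2] | (2 : ℤ_[2]) ^ n ∣ x} = {x : ℤ_[2] | ‖x‖ < (2 : ℝ) ^ (-(n : ℤ) + 1)} := by
    ext x
    have h := PadicInt.norm_le_pow_iff_norm_lt_pow_add_one (p := 2) x (-n : ℤ)
    have hc : ((2 : ℕ) : ℝ) = (2 : ℝ) := by norm_num
    rw [hc] at h
    rw [mem_setOf_eq, mem_setOf_eq, dvd_iff_norm, h]
  rw [this]
  exact isOpen_lt continuous_norm continuous_const

lemma ball_eq_coset (n : ℕ) (a : ℤ_[2]) :
    {x : ℤ_[2] | (2 : ℤ_[2]) ^ n ∣ x - a} = (fun y => -a + y) ⁻¹' {x : ℤ_[2] | (2 : ℤ_[2]) ^ n ∣ x} := by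
  ext x
  simp only [mem_setOf_eq, mem_preimage]
  rw [neg_add_eq_sub]

lemma measurableSet_ball (n : ℕ) (a : ℤ_[2]) :
    MeasurableSet {x : ℤ_[2] | (2 : ℤ_[2]) ^ n ∣ x - a} := by
  rw [ball_eq_coset]
  exact (isClosed_dvdSet n).measurableSet.preimage (measurable_const_add _)

lemma measure_dvdSet (μ : Measure ℤ_[2]) [μ.IsAddHaarMeasure] [IsProbabilityMeasure μ]
    (n : ℕ) : μ {x : ℤ_[2] | (2 : ℤ_[2]) ^ n ∣ x} = ((2 : ℝ≥0∞) ^ n)⁻¹ := by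
  have h2 : ((2 : ℕ) : ℤ_[2]) = (2 : ℤ_[2]) := by norm_cast
  set S : Set ℤ_[2] := {x : ℤ_[2] | (2 : ℤ_[2]) ^ n ∣ x} with hS
  have hZ : NeZero (2 ^ n) := ⟨by positivity⟩
  -- cosets
  set g : ZMod (2 ^ n) → Set ℤ_[2] := fun z => {x : ℤ_[2] | (2 : ℤ_[2]) ^ n ∣ x - ((z.val : ℕ) : ℤ_[2])} with hg
  have hker : ∀ x : ℤ_[2], PadicInt.toZModPow n x = 0 ↔ (2 : ℤ_[2]) ^ n ∣ x := by
    intro x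
    rw [← RingHom.mem_ker, PadicInt.ker_toZModPow, Ideal.mem_span_singleton, h2]
  have hgz : ∀ z x, x ∈ g z ↔ PadicInt.toZModPow n x = z := by
    intro z x
    have hx0 : PadicInt.toZModPow n (((z.val : ℕ) : ℤ_[2])) = z := by
      rw [map_natCast]
      exact ZMod.natCast_rightInverse z
    rw [hg]
    simp only [mem_setOf_eq]
    rw [← hker (x - _), map_sub, hx0, sub_eq_zero]
  have hcover : univ = ⋃ z : ZMod (2 ^ n), g z := by
    ext x
    simp only [mem_univ, mem_iUnion, true_iff]
    exact ⟨_, (hgz _ x).2 rfl⟩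
  have hdisj : Pairwise (Function.onFun Disjoint g) := by
    intro z w hzw
    rw [Function.onFun, Set.disjoint_left]
    intro x hx hx'
    exact hzw ((hgz z x).1 hx ▸ ((hgz w x).1 hx').symm ▸ rfl)
  have hmeas : ∀ z, MeasurableSet (g z) := fun z => measurableSet_ball n _
  have hsame : ∀ z, μ (g z) = μ S := by
    intro z
    rw [hg]
    simp only
    rw [ball_eq_coset, measure_preimage_add]
  have hsum : (1 : ℝ≥0∞) = (2 : ℝ≥0∞) ^ n * μ S := by
    have htot := measure_iUnion (μ := μ) hdisj hmeas
    rw [← hcover, measure_univ] at htot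
    rw [htot, tsum_fintype]
    simp only [hsame, Finset.sum_const, Finset.card_univ, ZMod.card, nsmul_eq_mul]
    push_cast
    ring
  have h0 : ((2 : ℝ≥0∞) ^ n) ≠ 0 := pow_ne_zero _ two_ne_zero
  have htop : ((2 : ℝ≥0∞) ^ n) ≠ ⊤ := ENNReal.pow_ne_top ENNReal.ofNat_ne_top
  have := congrArg (fun x => ((2 : ℝ≥0∞) ^ n)⁻¹ * x) hsum
  simpa [← mul_assoc, ENNReal.inv_mul_cancel h0 htop] using this.symm



section Dynamics
variable (T₂ : ℤ_[2] → ℤ_[2])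
    (hodd : ∀ x : ℤ_[2], ¬ (2 ∣ x) → 2 * T₂ x = 3 * x + 1)
    (heven : ∀ x : ℤ_[2], 2 ∣ x → 2 * T₂ x = x)
include hodd heven

lemma step (n : ℕ) (x : ℤ_[2]) :
    ∃ u : ℤ_[2], IsUnit u ∧ ∀ t, T₂ (x + 2 ^ (n + 1) * t) = T₂ x + 2 ^ n * (u * t) := by
  by_cases hx : (2 : ℤ_[2]) ∣ x
  · refine ⟨1, isUnit_one, fun t => ?_⟩
    have h1 : (2 : ℤ_[2]) ∣ x + 2 ^ (n + 1) * t := dvd_add hx ⟨2 ^ n * t, by ring⟩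
    apply mul_left_cancel₀ two_ne_zero'
    rw [heven _ h1]
    linear_combination -heven x hx
  · refine ⟨3, isUnit_three, fun t => ?_⟩
    have h1 : ¬ (2 : ℤ_[2]) ∣ x + 2 ^ (n + 1) * t := by
      intro h
      apply hx
      have h2 : (2 : ℤ_[2]) ∣ 2 ^ (n + 1) * t := ⟨2 ^ n * t, by ring⟩
      simpa using dvd_sub h h2
    apply mul_left_cancel₀ two_ne_zero'
    rw [hodd _ h1]
    linear_combination -hodd x hx

lemma iter (n : ℕ) : ∀ x : ℤ_[2],
    ∃ u : ℤ_[2], IsUnit u ∧ ∀ t, T₂^[n] (x + 2 ^ n * t) = T₂^[n] x + u * t := by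
  induction n with
  | zero => exact fun x => ⟨1, isUnit_one, fun t => by simp⟩
  | succ n ih =>
    intro x
    obtain ⟨u₀, hu₀, hstep⟩ := step T₂ hodd heven n x
    obtain ⟨u₁, hu₁, hiter⟩ := ih (T₂ x)
    refine ⟨u₁ * u₀, hu₁.mul hu₀, fun t => ?_⟩
    rw [Function.iterate_succ_apply, Function.iterate_succ_apply, hstep t, hiter (u₀ * t)]
    ring_nf

lemma preim (S : Set ℤ_[2]) :
    ∃ (c₁ b₁ c₂ b₂ : ℤ_[2]), b₁ ≠ 0 ∧ b₂ ≠ 0 ∧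
      ({x : ℤ_[2] | b₁ ∣ x} = {x : ℤ_[2] | (2:ℤ_[2]) ∣ x}) ∧
      ({x : ℤ_[2] | b₂ ∣ x} = {x : ℤ_[2] | (2:ℤ_[2]) ∣ x}) ∧
      T₂ ⁻¹' S = (fun t => c₁ + b₁ * t) '' S ∪ (fun t => c₂ + b₂ * t) '' S ∧
      Disjoint ((fun t => c₁ + b₁ * t) '' S) ((fun t => c₂ + b₂ * t) '' S) := by
  obtain ⟨w, hw⟩ := isUnit_three
  set v : ℤ_[2] := ((w⁻¹ : ℤ_[2]ˣ) : ℤ_[2]) with hv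
  have hv3 : v * 3 = 1 := by rw [hv, ← hw]; exact w.inv_mul
  have hvne : v ≠ 0 := (w⁻¹).isUnit.ne_zero
  refine ⟨v * (-1), v * 2, 0, 2, mul_ne_zero hvne two_ne_zero', two_ne_zero', ?_, ?_, ?_, ?_⟩
  · ext x
    simp only [mem_setOf_eq]
    constructor
    · rintro ⟨k, rfl⟩; exact ⟨v * k, by ring⟩
    · rintro ⟨k, rfl⟩; exact ⟨3 * k, by linear_combination -2 * k * hv3⟩
  · rfl
  · have hoddimg : ∀ s : ℤ_[2], ¬ (2 : ℤ_[2]) ∣ (v * (-1) + v * 2 * s) := by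
      intro s hdvd
      obtain ⟨k, hk⟩ := hdvd
      exact not_two_dvd_one ⟨s - 3 * k, by linear_combination -3 * hk + (2 * s - 1) * hv3⟩
    have hT1 : ∀ s : ℤ_[2], T₂ (v * (-1) + v * 2 * s) = s := by
      intro s
      apply mul_left_cancel₀ two_ne_zero'
      rw [hodd _ (hoddimg s)]
      linear_combination (2 * s - 1) * hv3
    have hT2 : ∀ s : ℤ_[2], T₂ (0 + 2 * s) = s := by
      intro s
      apply mul_left_cancel₀ two_ne_zero'
      rw [heven _ ⟨s, by ring⟩]
      ring
    ext x
    simp only [mem_preimage, mem_union, mem_image]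
    constructor
    · intro hx
      rcases parity x with h2 | h2
      · obtain ⟨y, hy⟩ := id h2
        have hTy : T₂ x = y := mul_left_cancel₀ two_ne_zero' (by rw [heven _ h2]; exact hy)
        exact Or.inr ⟨T₂ x, hx, by rw [hTy]; linear_combination -hy⟩
      · have hxodd : ¬ (2 : ℤ_[2]) ∣ x := by
          intro hdvd
          exact not_two_dvd_one (by simpa using dvd_sub hdvd h2)
        refine Or.inl ⟨T₂ x, hx, ?_⟩
        linear_combination v * hodd x hxodd + x * hv3
    · rintro (⟨s, hs, rfl⟩ | ⟨s, hs, rfl⟩)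
      · rwa [hT1 s]
      · rwa [hT2 s]
  · rw [Set.disjoint_left]
    rintro a ⟨s, hs, rfl⟩ ⟨s', hs', ha⟩
    have hoddimg : ¬ (2 : ℤ_[2]) ∣ (v * (-1) + v * 2 * s) := by
      intro hdvd
      obtain ⟨k, hk⟩ := hdvd
      exact not_two_dvd_one ⟨s - 3 * k, by linear_combination -3 * hk + (2 * s - 1) * hv3⟩
    exact hoddimg ⟨s', by linear_combination -ha⟩


lemma T2_measurable : Measurable T₂ := by
  intro S hS
  obtain ⟨c₁, b₁, c₂, b₂, hb₁, hb₂, -, -, hpre, -⟩ := preim T₂ hodd heven S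
  rw [hpre]
  exact ((me_affine c₁ b₁ hb₁).measurableSet_image' hS).union
    ((me_affine c₂ b₂ hb₂).measurableSet_image' hS)

lemma T2_preserving (μ : Measure ℤ_[2]) [μ.IsAddHaarMeasure] [IsProbabilityMeasure μ] :
    MeasurePreserving T₂ μ μ := by
  refine ⟨T2_measurable T₂ hodd heven, ?_⟩
  ext S hS
  rw [Measure.map_apply (T2_measurable T₂ hodd heven) hS]
  obtain ⟨c₁, b₁, c₂, b₂, hb₁, hb₂, hd₁, hd₂, hpre, hdisj⟩ := preim T₂ hodd heven S
  rw [hpre, measure_union hdisj ((me_affine c₂ b₂ hb₂).measurableSet_image' hS)]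
  have h1 : μ ((fun t => c₁ + b₁ * t) '' S) = μ {x : ℤ_[2] | (2:ℤ_[2]) ∣ x} * μ S := by
    rw [← (me_affine c₁ b₁ hb₁).comap_apply μ S, comap_affine μ c₁ b₁ hb₁, hd₁]
    rfl
  have h2 : μ ((fun t => c₂ + b₂ * t) '' S) = μ {x : ℤ_[2] | (2:ℤ_[2]) ∣ x} * μ S := by
    rw [← (me_affine c₂ b₂ hb₂).comap_apply μ S, comap_affine μ c₂ b₂ hb₂, hd₂]
    rfl
  have hhalf : μ {x : ℤ_[2] | (2:ℤ_[2]) ∣ x} = 2⁻¹ := by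
    have := measure_dvdSet μ 1
    simpa using this
  rw [h1, h2, hhalf, ← add_mul, ENNReal.inv_two_add_inv_two, one_mul]

lemma ball_inter_invariant (μ : Measure ℤ_[2]) [μ.IsAddHaarMeasure] [IsProbabilityMeasure μ]
    (A : Set ℤ_[2]) (hA : MeasurableSet A) (hinv : (T₂ ⁻¹' A) =ᵐ[μ] A)
    (n : ℕ) (a : ℤ_[2]) :
    μ (A ∩ {x : ℤ_[2] | (2:ℤ_[2]) ^ n ∣ x - a}) = ((2 : ℝ≥0∞) ^ n)⁻¹ * μ A := by
  have hqmp := (T2_preserving T₂ hodd heven μ).quasiMeasurePreserving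
  have hinvn : (T₂^[n] ⁻¹' A) =ᵐ[μ] A := hqmp.preimage_iterate_ae_eq n hinv
  set f : ℤ_[2] → ℤ_[2] := fun t => a + 2 ^ n * t with hf
  have hBrange : {x : ℤ_[2] | (2:ℤ_[2]) ^ n ∣ x - a} = range f := by
    ext x
    simp only [mem_setOf_eq, mem_range, hf]
    constructor
    · rintro ⟨t, ht⟩; exact ⟨t, by linear_combination -ht⟩
    · rintro ⟨t, rfl⟩; exact ⟨t, by ring⟩
  obtain ⟨u, hu, hiter⟩ := iter T₂ hodd heven n a
  set g : ℤ_[2] → ℤ_[2] := fun t => T₂^[n] a + u * t with hg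
  have hfg : (fun t => T₂^[n] (f t)) = g := by
    funext t
    simp only [hf, hg]
    rw [hiter t]
  have hgmeas : Measurable g := by
    rw [hg]; exact (measurable_id.const_mul u).const_add _
  have step1 : μ (A ∩ {x : ℤ_[2] | (2:ℤ_[2]) ^ n ∣ x - a})
      = μ ((T₂^[n] ⁻¹' A) ∩ {x : ℤ_[2] | (2:ℤ_[2]) ^ n ∣ x - a}) :=
    measure_congr ((hinvn.symm).inter (Filter.EventuallyEq.refl _ _))
  have step2 : (T₂^[n] ⁻¹' A) ∩ {x : ℤ_[2] | (2:ℤ_[2]) ^ n ∣ x - a} = f '' (g ⁻¹' A) := by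
    rw [hBrange, ← Set.image_preimage_eq_inter_range, ← Set.preimage_comp]
    rw [show T₂^[n] ∘ f = g from hfg]
  have hpow_ne : (2 : ℤ_[2]) ^ n ≠ 0 := pow_ne_zero _ two_ne_zero'
  have step3 : μ (f '' (g ⁻¹' A)) = ((2 : ℝ≥0∞) ^ n)⁻¹ * μ (g ⁻¹' A) := by
    rw [← (me_affine a _ hpow_ne).comap_apply μ _, comap_affine μ a _ hpow_ne,
      measure_dvdSet μ n]
    rfl
  have step4 : μ (g ⁻¹' A) = μ A := by
    have hcom : μ.comap g = μ := by
      rw [hg, comap_affine μ _ u hu.ne_zero]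
      have : {x : ℤ_[2] | u ∣ x} = univ := eq_univ_of_forall fun x => hu.dvd
      rw [this, measure_univ, one_smul]
    have hrangeg : range g = univ := by
      obtain ⟨w, hw⟩ := hu
      apply eq_univ_of_forall
      intro x
      refine ⟨((w⁻¹ : ℤ_[2]ˣ) : ℤ_[2]) * (x - T₂^[n] a), ?_⟩
      simp only [hg]
      have : u * (((w⁻¹ : ℤ_[2]ˣ) : ℤ_[2]) * (x - T₂^[n] a)) = x - T₂^[n] a := by
        rw [← mul_assoc, ← hw, ← Units.val_mul, mul_inv_cancel, Units.val_one, one_mul]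
      rw [this]
      ring
    have := (me_affine (T₂^[n] a) u hu.ne_zero).comap_apply μ (g ⁻¹' A)
    rw [← hg] at this
    rw [hcom] at this
    rw [this, Set.image_preimage_eq_inter_range, hrangeg, inter_univ]
  rw [step1, step2, step3, step4]


end Dynamics

def C : Set (Set ℤ_[2]) :=
  {s | ∃ n r : ℕ, s = {x : ℤ_[2] | (2 : ℤ_[2]) ^ n ∣ x - (r : ℤ_[2])}}

lemma basis : TopologicalSpace.IsTopologicalBasis C := by
  apply TopologicalSpace.isTopologicalBasis_of_isOpen_of_nhds
  · rintro s ⟨n, r, rfl⟩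
    rw [ball_eq_coset]
    exact (isOpen_dvdSet n).preimage (continuous_const.add continuous_id)
  · intro a u hau hu
    obtain ⟨ε, hε, hball⟩ := Metric.isOpen_iff.1 hu a hau
    obtain ⟨n, hn⟩ := exists_pow_lt_of_lt_one hε (by norm_num : (1 / 2 : ℝ) < 1)
    have hspec := PadicInt.appr_spec n a
    rw [Ideal.mem_span_singleton] at hspec
    have hc2 : ((2 : ℕ) : ℤ_[2]) = (2 : ℤ_[2]) := by norm_cast
    rw [hc2] at hspec
    refine ⟨{x : ℤ_[2] | (2 : ℤ_[2]) ^ n ∣ x - (PadicInt.appr a n : ℤ_[2])},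
      ⟨n, PadicInt.appr a n, rfl⟩, hspec, ?_⟩
    intro y hy
    apply hball
    rw [Metric.mem_ball, dist_eq_norm]
    have hdvd : (2 : ℤ_[2]) ^ n ∣ y - a := by
      have := dvd_sub hy hspec
      simpa using this
    have hle := (dvd_iff_norm n (y - a)).1 hdvd
    calc ‖y - a‖ ≤ (2 : ℝ) ^ (-n : ℤ) := hle
      _ = (1 / 2 : ℝ) ^ n := by
          rw [zpow_neg, zpow_natCast, one_div, inv_pow]
      _ < ε := hn

lemma subset_ball {n m : ℕ} {r q : ℤ_[2]} (hnm : n ≤ m) (z : ℤ_[2])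
    (hz1 : (2 : ℤ_[2]) ^ n ∣ z - r) (hz2 : (2 : ℤ_[2]) ^ m ∣ z - q) :
    {x : ℤ_[2] | (2 : ℤ_[2]) ^ m ∣ x - q} ⊆ {x : ℤ_[2] | (2 : ℤ_[2]) ^ n ∣ x - r} := by
  intro y hy
  simp only [mem_setOf_eq] at hy ⊢
  have h1 : (2 : ℤ_[2]) ^ n ∣ y - q := (pow_dvd_pow _ hnm).trans hy
  have h2 : (2 : ℤ_[2]) ^ n ∣ z - q := (pow_dvd_pow _ hnm).trans hz2
  have := dvd_add (dvd_sub h1 h2) hz1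
  simpa using this

lemma piSystem : IsPiSystem C := by
  rintro s ⟨n, r, rfl⟩ t ⟨m, q, rfl⟩ ⟨z, hz1, hz2⟩
  simp only [mem_setOf_eq] at hz1 hz2
  rcases le_total n m with hnm | hmn
  · rw [inter_eq_right.2 (subset_ball hnm z hz1 hz2)]
    exact ⟨m, q, rfl⟩
  · rw [inter_eq_left.2 (subset_ball hmn z hz2 hz1)]
    exact ⟨n, r, rfl⟩

lemma measure_ball (μ : Measure ℤ_[2]) [μ.IsAddHaarMeasure] [IsProbabilityMeasure μ]
    (n : ℕ) (a : ℤ_[2]) :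
    μ {x : ℤ_[2] | (2 : ℤ_[2]) ^ n ∣ x - a} = ((2 : ℝ≥0∞) ^ n)⁻¹ := by
  rw [ball_eq_coset, measure_preimage_add, measure_dvdSet]

end Collatz2

open Collatz2

/-- The 2-adic extension of the 3x+1 function is ergodic for the normalized Haar
measure on `ℤ₂`: every measurable set `A` with `T₂⁻¹(A) = A` up to measure zero
has measure 0 or 1. -/
theorem two_adic_extension_ergodic (T₂ : ℤ_[2] → ℤ_[2])
    (hodd : ∀ x : ℤ_[2], ¬ (2 ∣ x) → 2 * T₂ x = 3 * x + 1)
    (heven : ∀ x : ℤ_[2], 2 ∣ x → 2 * T₂ x = x)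
    (μ : Measure ℤ_[2]) [μ.IsAddHaarMeasure] [IsProbabilityMeasure μ] :
    ∀ A : Set ℤ_[2], MeasurableSet A → (T₂ ⁻¹' A) =ᵐ[μ] A → μ A = 0 ∨ μ A = 1 := by
  intro A hA hinv
  have hgen : (inferInstance : MeasurableSpace ℤ_[2]) = .generateFrom C := by
    rw [BorelSpace.measurable_eq (α := ℤ_[2])]
    exact basis.borel_eq_generateFrom
  have hext : μ.restrict A = μ A • μ := by
    refine ext_of_generate_finite C hgen piSystem ?_ ?_
    · rintro s ⟨n, r, rfl⟩
      rw [Measure.restrict_apply' hA, inter_comm,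
        ball_inter_invariant T₂ hodd heven μ A hA hinv n r,
        Measure.smul_apply, measure_ball μ n r, smul_eq_mul, mul_comm]
    · rw [Measure.restrict_apply_univ, Measure.smul_apply, measure_univ, smul_eq_mul, mul_one]
  have hself : μ A = μ A * μ A := by
    have h1 := congrArg (fun m : Measure ℤ_[2] => m A) hext
    simpa [Measure.restrict_apply' hA, Measure.smul_apply, smul_eq_mul] using h1
  rcases eq_or_ne (μ A) 0 with h0 | h0
  · exact Or.inl h0
  · right
    have htop : μ A ≠ ⊤ := (measure_lt_top μ A).ne
    have h2 : μ A * 1 = μ A * μ A := by rw [mul_one]; exact hself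
    exact ((ENNReal.mul_right_inj h0 htop).1 h2).symm
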